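/- arXiv:0905.2375 — 2 statements merged into one kernel-verified Lean document; each statement's English description precedes it below -/
import Mathlib

section
/- Let n ≥ 1, T > 0, let γ : [0,T] → ℝⁿ be continuously differentiable, let h : ℝⁿ → ℝⁿ be continuous, and let w : [0,T] → ℝ be continuously differentiable with w'(t) = w(t) ⟨h(γ(t)), γ'(t)⟩ for all t ∈ [0,T]. Let ψ : ℝⁿ → ℝ be continuously differentiable with ψ(γ(0)) = ψ(γ(T)) = 0. Then ∫_0^T w(t) ( ψ(γ(t)) ⟨h(γ(t)), γ'(t)⟩ + ⟨∇ψ(γ(t)), γ'(t)⟩ ) dt = 0. -/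
open RealInnerProductSpace

/-- If the logarithmic derivative of the weight `w` along the curve `γ`
equals `⟨h(γ(t)), γ'(t)⟫` for a fixed covector field `h` (condition (econd) of the paper),
then the field `ψ h + dψ` integrates to zero along the curve against the weight `w`,
for any `C¹` function `ψ` vanishing at the endpoints. -/
theorem stmt_5 (n : ℕ) (hn : 1 ≤ n) (T : ℝ) (hT : 0 < T)
    (γ : ℝ → EuclideanSpace ℝ (Fin n)) (hγ : ContDiff ℝ 1 γ)
    (h : EuclideanSpace ℝ (Fin n) → EuclideanSpace ℝ (Fin n)) (hh : Continuous h)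
    (w : ℝ → ℝ) (hw : ContDiff ℝ 1 w)
    (hw' : ∀ t ∈ Set.Icc (0 : ℝ) T, deriv w t = w t * ⟪h (γ t), deriv γ t⟫)
    (ψ : EuclideanSpace ℝ (Fin n) → ℝ) (hψ : ContDiff ℝ 1 ψ)
    (h0 : ψ (γ 0) = 0) (hT' : ψ (γ T) = 0) :
    ∫ t in (0 : ℝ)..T,
      w t * (ψ (γ t) * ⟪h (γ t), deriv γ t⟫ + ⟪gradient ψ (γ t), deriv γ t⟫) = 0 := by
  have hγd : Differentiable ℝ γ := hγ.differentiable one_ne_zero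
  have hψd : Differentiable ℝ ψ := hψ.differentiable one_ne_zero
  have hwd : Differentiable ℝ w := hw.differentiable one_ne_zero
  have hgrad : ∀ x v, (⟪gradient ψ x, v⟫ : ℝ) = fderiv ℝ ψ x v := by
    intro x v
    rw [gradient, InnerProductSpace.toDual_symm_apply]
  have key : ∀ t ∈ Set.uIcc (0 : ℝ) T,
      HasDerivAt (fun t => w t * ψ (γ t))
        (w t * (ψ (γ t) * ⟪h (γ t), deriv γ t⟫ + ⟪gradient ψ (γ t), deriv γ t⟫)) t := by
    intro t ht
    rw [Set.uIcc_of_le hT.le] at ht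
    have h1 : HasDerivAt γ (deriv γ t) t := (hγd t).hasDerivAt
    have h2 : HasDerivAt (fun t => ψ (γ t)) (fderiv ℝ ψ (γ t) (deriv γ t)) t :=
      (hψd (γ t)).hasFDerivAt.comp_hasDerivAt t h1
    have h3 : HasDerivAt w (deriv w t) t := (hwd t).hasDerivAt
    have : HasDerivAt (fun t => w t * ψ (γ t))
        (deriv w t * ψ (γ t) + w t * fderiv ℝ ψ (γ t) (deriv γ t)) t := h3.mul h2
    convert this using 1
    rw [hw' t ht, hgrad]
    ring
  have hcont : Continuous fun t =>
      w t * (ψ (γ t) * ⟪h (γ t), deriv γ t⟫ + ⟪gradient ψ (γ t), deriv γ t⟫) := by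
    have hdγ : Continuous (deriv γ) := (hγ.iterate_deriv' 0 1).continuous
    have hgψ : Continuous (gradient ψ) := by
      have : Continuous (fderiv ℝ ψ) := (hψ.fderiv_right (m := 0) (by norm_num)).continuous
      exact (LinearIsometryEquiv.continuous _).comp this
    have hc1 : Continuous fun t => (⟪h (γ t), deriv γ t⟫ : ℝ) :=
      (hh.comp hγ.continuous).inner hdγ
    have hc2 : Continuous fun t => (⟪gradient ψ (γ t), deriv γ t⟫ : ℝ) :=
      (hgψ.comp hγ.continuous).inner hdγ
    exact hw.continuous.mul
      (((hψ.continuous.comp hγ.continuous).mul hc1).add hc2)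
  rw [intervalIntegral.integral_eq_sub_of_hasDerivAt key
    (hcont.intervalIntegrable 0 T)]
  simp [h0, hT']
end

section
/- Let n ≥ 2 and let ξ ∈ ℝⁿ with ξ ≠ 0. Let θ₁, …, θ_{n−1} be a basis of the hyperplane ξ^⊥ = {v ∈ ℝⁿ : ⟨v, ξ⟩ = 0}, let μ₁, …, μ_{n−1} ∈ ℝ, and set θₙ = Σ_{j=1}^{n−1} μ_j θ_j. Let w₁, …, wₙ ∈ ℝ be nonzero scalars and a₁, …, aₙ ∈ ℝ scalars satisfying aₙ / wₙ ≠ Σ_{j=1}^{n−1} μ_j a_j / w_j. If f ∈ ℝⁿ and φ ∈ ℝ satisfy ⟨f, ξ⟩ = 0 and w_i ⟨f, θ_i⟩ + a_i φ = 0 for every i = 1, …, n, then f = 0 and φ = 0. -/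
open RealInnerProductSpace

/-- pointwise ellipticity step in the proof of Proposition 3.5.
Given a basis `θ₁, …, θ_{n-1}` of the hyperplane `ξ^⊥`, a combination
`θₙ = Σ μ_j θ_j`, nonzero weights `w_i` and scalars `a_i` with
`aₙ/wₙ ≠ Σ μ_j a_j/w_j`, the equations `⟨f, ξ⟩ = 0` and
`w_i ⟨f, θ_i⟩ + a_i φ = 0` (for `i = 1, …, n`) force `f = 0` and `φ = 0`. -/
theorem stmt_7 (n : ℕ) (hn : 2 ≤ n)
    (ξ : EuclideanSpace ℝ (Fin n)) (hξ : ξ ≠ 0)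
    (θ : Fin (n - 1) → EuclideanSpace ℝ (Fin n))
    (hindep : LinearIndependent ℝ θ)
    (hspan : Submodule.span ℝ (Set.range θ) = (Submodule.span ℝ {ξ})ᗮ)
    (μ : Fin (n - 1) → ℝ)
    (w a : Fin (n - 1) → ℝ) (wN aN : ℝ)
    (hw : ∀ j, w j ≠ 0) (hwN : wN ≠ 0)
    (hcond : aN / wN ≠ ∑ j, μ j * (a j / w j))
    (f : EuclideanSpace ℝ (Fin n)) (φ : ℝ)
    (hfξ : ⟪f, ξ⟫ = 0)
    (heq : ∀ j, w j * ⟪f, θ j⟫ + a j * φ = 0)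
    (heqN : wN * ⟪f, ∑ j, μ j • θ j⟫ + aN * φ = 0) :
    f = 0 ∧ φ = 0 := by
  have hθ : ∀ j, ⟪f, θ j⟫ = -(a j / w j) * φ := by
    intro j
    apply mul_left_cancel₀ (hw j)
    have hc : w j * (a j / w j) = a j := by
      rw [mul_div_assoc']
      exact mul_div_cancel_left₀ _ (hw j)
    have h2 : w j * (-(a j / w j) * φ) = -(a j * φ) := by
      rw [neg_mul, mul_neg, ← mul_assoc, hc]
    rw [h2]
    linarith [heq j]
  have hsum : ⟪f, ∑ j, μ j • θ j⟫ = -(∑ j, μ j * (a j / w j)) * φ := by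
    rw [inner_sum]
    simp only [real_inner_smul_right, hθ]
    have h3 : ∀ x, μ x * (-(a x / w x) * φ) = -(μ x * (a x / w x)) * φ := fun x => by ring
    simp_rw [h3]
    rw [← Finset.sum_mul, Finset.sum_neg_distrib]
  have hφ : φ = 0 := by
    rw [hsum] at heqN
    have h2 : (aN - wN * ∑ j, μ j * (a j / w j)) * φ = 0 := by
      linear_combination heqN
    by_contra hφ
    have h3 : aN - wN * ∑ j, μ j * (a j / w j) = 0 :=
      (mul_eq_zero.mp h2).resolve_right hφ
    apply hcond
    rw [div_eq_iff hwN]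
    linear_combination h3
  have hθ0 : ∀ j, ⟪f, θ j⟫ = 0 := by
    intro j; rw [hθ j, hφ]; ring
  have hmem : f ∈ (Submodule.span ℝ (Set.range θ))ᗮ := by
    rw [Submodule.mem_orthogonal]
    intro u hu
    induction hu using Submodule.span_induction with
    | mem x hx =>
      obtain ⟨j, rfl⟩ := hx
      rw [real_inner_comm]; exact hθ0 j
    | zero => simp
    | add x y _ _ hx hy => rw [inner_add_left, hx, hy]; ring
    | smul c x _ hx => rw [real_inner_smul_left, hx]; ring
  rw [hspan, Submodule.orthogonal_orthogonal] at hmem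
  rw [Submodule.mem_span_singleton] at hmem
  obtain ⟨c, rfl⟩ := hmem
  have : c * ⟪ξ, ξ⟫ = 0 := by
    rw [← real_inner_smul_left]; exact hfξ
  have hc : c = 0 := by
    have hξξ : ⟪ξ, ξ⟫ ≠ 0 := fun h => hξ (inner_self_eq_zero.mp h)
    exact (mul_eq_zero.mp this).resolve_right hξξ
  exact ⟨by rw [hc, zero_smul], hφ⟩
end
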